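/- arXiv:1805.01043 — 8 statements merged into one kernel-verified Lean document; each statement's English description precedes it below -/
import Mathlib

section
/- Let A, B be complex numbers with |A|>1, |B|≤1, and let 0 ≤ α < 1. Suppose f is analytic on the unit disc with f(0)=0, f'(0)=1 and zf'(z)/f(z) ≺ (1+Az)/(1+Bz), and g is analytic with g(0)=0, g'(0)=1 and 1 + zg''(z)/g'(z) ≺ (1+Az)/(1+Bz). Define T_g f(z) = ∫₀^z f(s) g'(s) ds. Then Re(1 + z·(T_g f)''(z)/(T_g f)'(z)) > α for all |z| < r_c, where r_c = (2−α)/(2|A|) if B = 0, and r_c = (|B−A| − |(α−1)B − A|)/(α|B|² − 2Re(A·conj(B))) if B ≠ 0. -/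
open Complex Metric

lemma quadAux (a b s c t r : ℝ) (hb : 0 < b) (hs : 0 ≤ s)
    (hD : s^2 = b^2 - 4*a*c) (hr : r = (b - s)/(2*c)) (ht0 : 0 ≤ t) (htr : t < r) :
    0 < a - s*t - c*t^2 := by
  have hc : c ≠ 0 := by
    rintro rfl
    rw [mul_zero, div_zero] at hr
    linarith
  have h2cr : 2*c*r = b - s := by
    rw [hr]; field_simp
  have h4 : 4*c*(c*r^2 + r*s - a) = 0 := by
    linear_combination (2*c*r + s + b) * h2cr - hD
  have hacr : a = r*s + c*r^2 := by
    rcases mul_eq_zero.mp h4 with h | h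
    · exfalso; exact hc (by linarith)
    · linarith
  have hfact : a - s*t - c*t^2 = (r - t)*(s + c*(r+t)) := by
    linear_combination hacr
  rw [hfact]
  have hrt : 0 < r - t := by linarith
  apply mul_pos hrt
  rcases lt_or_gt_of_ne hc with hneg | hpos
  · nlinarith [mul_pos (by linarith : (0:ℝ) < -c) hrt]
  · nlinarith [mul_nonneg hpos.le ht0]

lemma reBound (A B : ℂ) (hA : 1 < ‖A‖) (hB : ‖B‖ ≤ 1)
    (α : ℝ) (hα0 : 0 ≤ α) (hα1 : α < 1) (w : ℂ) (hw1 : ‖w‖ < 1)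
    (hwr : ‖w‖ < (if B = 0 then (2 - α) / (2 * ‖A‖)
        else (‖B - A‖ - ‖((α : ℂ) - 1) * B - A‖) /
          (α * ‖B‖^2 - 2 * (A * (starRingEnd ℂ) B).re))) :
    α/2 < ((1 + A*w)/(1 + B*w)).re := by
  have hA0 : (0:ℝ) < ‖A‖ := lt_trans one_pos hA
  have hsq : ∀ z : ℂ, ‖z‖^2 = z.re^2 + z.im^2 := fun z => by
    rw [Complex.sq_norm, Complex.normSq_apply]; ring
  by_cases hB0 : B = 0
  · rw [if_pos hB0] at hwr
    subst hB0
    have h1 : ‖A‖ * ‖w‖ < (2 - α)/2 := by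
      rw [lt_div_iff₀ (by linarith : (0:ℝ) < 2*‖A‖)] at hwr
      nlinarith
    have h2 : |(A*w).re| ≤ ‖A*w‖ := Complex.abs_re_le_norm (A*w)
    have h3 : ‖A*w‖ = ‖A‖ * ‖w‖ := norm_mul A w
    have habs : |(A*w).re| < (2-α)/2 := by rw [← h3] at h1; linarith
    simp only [zero_mul, add_zero, div_one, Complex.add_re, Complex.one_re]
    have := abs_lt.mp habs
    linarith
  · rw [if_neg hB0] at hwr
    set t := ‖w‖ with hts
    set s := ‖((α:ℂ) - 1) * B - A‖ with hss
    set b := ‖B - A‖ with hbs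
    set c := α*‖B‖^2/2 - (A * (starRingEnd ℂ) B).re with hcs
    have ht0 : 0 ≤ t := norm_nonneg w
    have hrw : (‖B - A‖ - ‖((α : ℂ) - 1) * B - A‖) /
          (α * ‖B‖^2 - 2 * (A * (starRingEnd ℂ) B).re) = (b - s)/(2*c) := by
      rw [show α * ‖B‖^2 - 2 * (A * (starRingEnd ℂ) B).re = 2*c from by rw [hcs]; ring]
    rw [hrw] at hwr
    have hb : 0 < b := by
      rw [hbs, norm_pos_iff]
      intro h
      have hBA : B = A := sub_eq_zero.mp h
      rw [hBA] at hB
      linarith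
    have hBsq : ‖B‖^2 = B.re^2 + B.im^2 := hsq B
    have hD : s^2 = b^2 - 4*(1 - α/2)*c := by
      rw [hss, hbs, hcs, hsq, hsq, hBsq]
      simp only [Complex.sub_re, Complex.sub_im, Complex.mul_re, Complex.mul_im,
        Complex.ofReal_re, Complex.ofReal_im, Complex.one_re, Complex.one_im,
        Complex.conj_re, Complex.conj_im]
      ring
    have quad := quadAux (1 - α/2) b s c t ((b-s)/(2*c)) hb (norm_nonneg _) hD rfl ht0 hwr
    -- denominator nonzero
    have hBw : ‖B*w‖ < 1 := by
      rw [norm_mul]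
      nlinarith
    have hden : (1 + B*w) ≠ 0 := by
      intro h
      have : B*w = -1 := by linear_combination h
      rw [this] at hBw
      simp at hBw
    have hns : 0 < Complex.normSq (1 + B*w) := Complex.normSq_pos.mpr hden
    rw [Complex.div_re, ← add_div, lt_div_iff₀ hns]
    have hX : -(s*t) ≤ ((A + ((1:ℂ) - (α:ℂ))*B) * w).re := by
      have h1 : ‖(A + ((1:ℂ) - (α:ℂ))*B) * w‖ = s * t := by
        rw [norm_mul, hss, hts]
        congr 1
        rw [← norm_neg]
        congr 1
        ring
      have h2 := Complex.abs_re_le_norm ((A + ((1:ℂ) - (α:ℂ))*B) * w)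
      rw [h1] at h2
      linarith [neg_abs_le (((A + ((1:ℂ) - (α:ℂ))*B) * w)).re]
    have ht2 : t^2 = w.re^2 + w.im^2 := hsq w
    have hiden : (1+A*w).re*(1+B*w).re + (1+A*w).im*(1+B*w).im
        - α/2 * Complex.normSq (1+B*w)
        = (1 - α/2) + ((A + ((1:ℂ) - (α:ℂ))*B) * w).re - c*t^2 := by
      rw [hcs, ht2, hBsq]
      simp only [Complex.normSq_apply, Complex.add_re, Complex.add_im, Complex.mul_re,
        Complex.mul_im, Complex.one_re, Complex.one_im, Complex.sub_re, Complex.sub_im,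
        Complex.ofReal_re, Complex.ofReal_im, Complex.conj_re, Complex.conj_im]
      ring
    linarith

theorem stmt1 (A B : ℂ) (hA : 1 < ‖A‖) (hB : ‖B‖ ≤ 1)
    (α : ℝ) (hα0 : 0 ≤ α) (hα1 : α < 1)
    (f : ℂ → ℂ) (hfd : DifferentiableOn ℂ f (ball (0:ℂ) 1))
    (hf0 : f 0 = 0) (hf1 : deriv f 0 = 1)
    (hfne : ∀ z ∈ ball (0:ℂ) 1, z ≠ 0 → f z ≠ 0)
    (hfsub : ∃ ω : ℂ → ℂ, DifferentiableOn ℂ ω (ball (0:ℂ) 1) ∧ ω 0 = 0 ∧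
      (∀ z ∈ ball (0:ℂ) 1, ω z ∈ ball (0:ℂ) 1) ∧
      ∀ z ∈ ball (0:ℂ) 1, z ≠ 0 →
        z * deriv f z / f z = (1 + A * ω z) / (1 + B * ω z))
    (g : ℂ → ℂ) (hgd : DifferentiableOn ℂ g (ball (0:ℂ) 1))
    (hg0 : g 0 = 0) (hg1 : deriv g 0 = 1)
    (hgne : ∀ z ∈ ball (0:ℂ) 1, deriv g z ≠ 0)
    (hgsub : ∃ ω : ℂ → ℂ, DifferentiableOn ℂ ω (ball (0:ℂ) 1) ∧ ω 0 = 0 ∧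
      (∀ z ∈ ball (0:ℂ) 1, ω z ∈ ball (0:ℂ) 1) ∧
      ∀ z ∈ ball (0:ℂ) 1,
        1 + z * deriv (deriv g) z / deriv g z = (1 + A * ω z) / (1 + B * ω z))
    (T : ℂ → ℂ) (hT : ∀ z ∈ ball (0:ℂ) 1, HasDerivAt T (f z * deriv g z) z) :
    ∀ z ∈ ball (0:ℂ) 1,
      ‖z‖ < (if B = 0 then (2 - α) / (2 * ‖A‖)
        else (‖B - A‖ - ‖((α : ℂ) - 1) * B - A‖) /
          (α * ‖B‖^2 - 2 * (A * (starRingEnd ℂ) B).re)) →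
      α < (1 + z * deriv (deriv T) z / deriv T z).re := by
  intro z hz hlt
  rcases eq_or_ne z 0 with rfl | hz0
  · simp only [zero_mul, zero_div, add_zero, Complex.one_re]
    exact hα1
  obtain ⟨ω₁, hω₁d, hω₁0, hω₁m, hω₁⟩ := hfsub
  obtain ⟨ω₂, hω₂d, hω₂0, hω₂m, hω₂⟩ := hgsub
  -- Schwarz lemma bounds
  have schwarz : ∀ (ω : ℂ → ℂ), DifferentiableOn ℂ ω (ball (0:ℂ) 1) → ω 0 = 0 →
      (∀ y ∈ ball (0:ℂ) 1, ω y ∈ ball (0:ℂ) 1) → ‖ω z‖ ≤ ‖z‖ := by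
    intro ω hd h0 hm
    have := Complex.dist_le_dist_of_mapsTo_ball_self hd (fun y hy => by rw [h0]; exact ball_subset_closedBall (hm y hy)) hz
    simpa [dist_eq_norm, h0] using this
  have hw₁s : ‖ω₁ z‖ ≤ ‖z‖ := schwarz ω₁ hω₁d hω₁0 hω₁m
  have hw₂s : ‖ω₂ z‖ ≤ ‖z‖ := schwarz ω₂ hω₂d hω₂0 hω₂m
  have hz1 : ‖z‖ < 1 := by simpa [mem_ball, dist_eq_norm] using hz
  -- derivatives of T
  have hmem : ball (0:ℂ) 1 ∈ nhds z := isOpen_ball.mem_nhds hz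
  have hEv : deriv T =ᶠ[nhds z] fun y => f y * deriv g y := by
    filter_upwards [hmem] with y hy
    exact (hT y hy).deriv
  have hganal : AnalyticOnNhd ℂ (deriv g) (ball (0:ℂ) 1) :=
    (hgd.analyticOnNhd isOpen_ball).deriv
  have hg'd : DifferentiableAt ℂ (deriv g) z := (hganal z hz).differentiableAt
  have hfda : DifferentiableAt ℂ f z := hfd.differentiableAt hmem
  have hT1 : deriv T z = f z * deriv g z := (hT z hz).deriv
  have hT2 : deriv (deriv T) z = deriv f z * deriv g z + f z * deriv (deriv g) z := by
    rw [hEv.deriv_eq]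
    exact deriv_mul hfda hg'd
  have hfz : f z ≠ 0 := hfne z hz hz0
  have hgz : deriv g z ≠ 0 := hgne z hz
  set P : ℂ := (1 + A * ω₁ z) / (1 + B * ω₁ z) with hP
  set Q : ℂ := (1 + A * ω₂ z) / (1 + B * ω₂ z) with hQ
  have e1 : z * deriv f z = P * f z := by
    rw [hP, ← hω₁ z hz hz0, div_mul_cancel₀ _ hfz]
  have e2 : z * deriv (deriv g) z = (Q - 1) * deriv g z := by
    have h := hω₂ z hz
    have : z * deriv (deriv g) z / deriv g z = Q - 1 := by
      rw [hQ, ← h]; ring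
    rw [← this, div_mul_cancel₀ _ hgz]
  have key : (1 : ℂ) + z * deriv (deriv T) z / deriv T z = P + Q := by
    rw [hT1, hT2]
    have hnum : z * (deriv f z * deriv g z + f z * deriv (deriv g) z)
        = (P + Q - 1) * (f z * deriv g z) := by
      linear_combination deriv g z * e1 + f z * e2
    rw [hnum, mul_div_assoc, div_self (mul_ne_zero hfz hgz), mul_one]
    ring
  rw [key]
  have hb₁ : α/2 < P.re :=
    reBound A B hA hB α hα0 hα1 (ω₁ z)
      (by simpa [mem_ball, dist_eq_norm] using hω₁m z hz) (lt_of_le_of_lt hw₁s hlt)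
  have hb₂ : α/2 < Q.re :=
    reBound A B hA hB α hα0 hα1 (ω₂ z)
      (by simpa [mem_ball, dist_eq_norm] using hω₂m z hz) (lt_of_le_of_lt hw₂s hlt)
  rw [Complex.add_re]
  linarith
end

section
/- Suppose f is analytic on the unit disc with f(0)=0, f'(0)=1, f nonvanishing on the punctured disc, satisfying Re(zf'(z)/f(z)) < 3/2 for all |z|<1, and g is analytic with g(0)=0, g'(0)=1, g' nonvanishing, satisfying Re(1 + zg''(z)/g'(z)) < 3/2 for all |z|<1, where moreover zf'/f ≺ (1+2z)/(1+z) and 1+zg''/g' ≺ (1+2z)/(1+z). Then for 0 ≤ α < 1, T_g f(z) = ∫₀^z f(s)g'(s)ds satisfies Re(1 + z(T_g f)''(z)/(T_g f)'(z)) > α for |z| < (α−2)/(α−4) = (2−α)/(4−α). -/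
open Complex Metric

lemma re_bound (w : ℂ) (r : ℝ) (hw : ‖w‖ ≤ r) (hr : r < 1) :
    2 - 1 / (1 - r) ≤ ((1 + 2 * w) / (1 + w)).re := by
  have hr0 : (0:ℝ) ≤ r := le_trans (norm_nonneg w) hw
  have h1r : (0:ℝ) < 1 - r := by linarith
  have hwn : ‖1 + w‖ ≥ 1 - r := by
    have := norm_add_le (1 + w) (-w)
    simp only [add_neg_cancel_right, norm_one, norm_neg] at this
    linarith
  have hne : (1 + w) ≠ 0 := by
    intro h
    rw [h, norm_zero] at hwn; linarith
  have key : (1 + 2 * w) / (1 + w) = 2 - 1 / (1 + w) := by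
    field_simp; ring
  rw [key]
  have : ((2:ℂ) - 1 / (1 + w)).re = 2 - (1 / (1 + w)).re := by simp
  rw [this]
  have hre : (1 / (1 + w)).re ≤ 1 / (1 - r) := by
    calc (1 / (1 + w)).re ≤ ‖1 / (1 + w)‖ := Complex.re_le_norm _
      _ = 1 / ‖1 + w‖ := by simp
      _ ≤ 1 / (1 - r) := by
          apply one_div_le_one_div_of_le h1r hwn
  linarith

theorem stmt2 (α : ℝ) (hα0 : 0 ≤ α) (hα1 : α < 1)
    (f : ℂ → ℂ) (hfd : DifferentiableOn ℂ f (ball (0:ℂ) 1))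
    (hf0 : f 0 = 0) (hf1 : deriv f 0 = 1)
    (hfne : ∀ z ∈ ball (0:ℂ) 1, z ≠ 0 → f z ≠ 0)
    (hfre : ∀ z ∈ ball (0:ℂ) 1, z ≠ 0 → (z * deriv f z / f z).re < 3 / 2)
    (hfsub : ∃ ω : ℂ → ℂ, DifferentiableOn ℂ ω (ball (0:ℂ) 1) ∧ ω 0 = 0 ∧
      (∀ z ∈ ball (0:ℂ) 1, ω z ∈ ball (0:ℂ) 1) ∧
      ∀ z ∈ ball (0:ℂ) 1, z ≠ 0 →
        z * deriv f z / f z = (1 + 2 * ω z) / (1 + ω z))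
    (g : ℂ → ℂ) (hgd : DifferentiableOn ℂ g (ball (0:ℂ) 1))
    (hg0 : g 0 = 0) (hg1 : deriv g 0 = 1)
    (hgne : ∀ z ∈ ball (0:ℂ) 1, deriv g z ≠ 0)
    (hgre : ∀ z ∈ ball (0:ℂ) 1, (1 + z * deriv (deriv g) z / deriv g z).re < 3 / 2)
    (hgsub : ∃ ω : ℂ → ℂ, DifferentiableOn ℂ ω (ball (0:ℂ) 1) ∧ ω 0 = 0 ∧
      (∀ z ∈ ball (0:ℂ) 1, ω z ∈ ball (0:ℂ) 1) ∧
      ∀ z ∈ ball (0:ℂ) 1,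
        1 + z * deriv (deriv g) z / deriv g z = (1 + 2 * ω z) / (1 + ω z))
    (T : ℂ → ℂ) (hT : ∀ z ∈ ball (0:ℂ) 1, HasDerivAt T (f z * deriv g z) z) :
    ∀ z ∈ ball (0:ℂ) 1, ‖z‖ < (2 - α) / (4 - α) →
      α < (1 + z * deriv (deriv T) z / deriv T z).re := by
  intro z hz hzr
  obtain ⟨ω₁, hω₁d, hω₁0, hω₁m, hω₁⟩ := hfsub
  obtain ⟨ω₂, hω₂d, hω₂0, hω₂m, hω₂⟩ := hgsub
  rcases eq_or_ne z 0 with rfl | hz0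
  · -- at 0 : deriv T 0 = f 0 * deriv g 0 = 0, expression is 1
    simp only [zero_mul, zero_div, add_zero, Complex.one_re]
    linarith
  -- z ≠ 0
  have hball : IsOpen (ball (0:ℂ) 1) := isOpen_ball
  have hmem : ball (0:ℂ) 1 ∈ nhds z := hball.mem_nhds hz
  -- deriv T equals f * deriv g near z
  have hTd : ∀ w ∈ ball (0:ℂ) 1, deriv T w = f w * deriv g w :=
    fun w hw => (hT w hw).deriv
  have hTd' : deriv T =ᶠ[nhds z] fun w => f w * deriv g w :=
    Filter.eventually_of_mem hmem hTd
  -- analyticity of g, hence differentiability of deriv g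
  have hgan : AnalyticOnNhd ℂ g (ball (0:ℂ) 1) := hgd.analyticOnNhd hball
  have hg'an : AnalyticOnNhd ℂ (deriv g) (ball (0:ℂ) 1) := hgan.deriv
  have hfz : DifferentiableAt ℂ f z := hfd.differentiableAt hmem
  have hg'z : DifferentiableAt ℂ (deriv g) z := (hg'an z hz).differentiableAt
  have hD2 : deriv (deriv T) z = deriv f z * deriv g z + f z * deriv (deriv g) z := by
    rw [hTd'.deriv_eq]
    exact (hfz.hasDerivAt.mul hg'z.hasDerivAt).deriv
  have hD1 : deriv T z = f z * deriv g z := hTd z hz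
  have hfnz : f z ≠ 0 := hfne z hz hz0
  have hgnz : deriv g z ≠ 0 := hgne z hz
  have hsplit : 1 + z * deriv (deriv T) z / deriv T z
      = z * deriv f z / f z + (1 + z * deriv (deriv g) z / deriv g z) := by
    rw [hD1, hD2]
    field_simp
    ring
  rw [hsplit, hω₁ z hz hz0, hω₂ z hz, Complex.add_re]
  -- Schwarz
  have hz1 : ‖z‖ < 1 := mem_ball_zero_iff.mp hz
  have hs1 : ‖ω₁ z‖ ≤ ‖z‖ := by
    have := Complex.norm_le_norm_of_mapsTo_ball hω₁d
      (fun w hw => ball_subset_closedBall (hω₁m w hw)) hω₁0 (z := z) (by simpa using hz1)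
    simpa using this
  have hs2 : ‖ω₂ z‖ ≤ ‖z‖ := by
    have := Complex.norm_le_norm_of_mapsTo_ball hω₂d
      (fun w hw => ball_subset_closedBall (hω₂m w hw)) hω₂0 (z := z) (by simpa using hz1)
    simpa using this
  have h1 := re_bound (ω₁ z) ‖z‖ hs1 hz1
  have h2 := re_bound (ω₂ z) ‖z‖ hs2 hz1
  -- arithmetic
  set r := ‖z‖ with hr
  have hr0 : (0:ℝ) ≤ r := norm_nonneg z
  have h1r : (0:ℝ) < 1 - r := by linarith
  have h4a : (0:ℝ) < 4 - α := by linarith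
  have hkey : α < 2 * (2 - 1 / (1 - r)) := by
    rw [lt_div_iff₀ h4a] at hzr
    have h : 2 / (1 - r) < 4 - α := by
      rw [div_lt_iff₀ h1r]; nlinarith
    have hrw : 2 * (2 - 1 / (1-r)) = 4 - 2 / (1-r) := by ring
    linarith [hrw ▸ (by linarith : α < 4 - 2 / (1-r))]
  linarith
end

section
/- Suppose f is analytic on the unit disc with f(0)=0, f'(0)=1, f nonvanishing on the punctured disc, with zf'/f ≺ (1+2z)/(1−z), and g is analytic, normalized, with 1+zg''/g' ≺ (1+2z)/(1−z). Then for 0 ≤ α < 1 the operator T_g f(z) = ∫₀^z f(s)g'(s)ds satisfies Re(1 + z(T_g f)''/(T_g f)') > α for all |z| < (2−α)/(4+α). -/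
open Complex Metric

lemma key_re (w : ℂ) (r : ℝ) (hw : ‖w‖ ≤ r) (hr : r < 1) :
    (1 - 2*r)/(1+r) ≤ ((1 + 2*w)/(1 - w)).re := by
  have hr0 : 0 ≤ r := le_trans (norm_nonneg w) hw
  have hwr : w.re^2 + w.im^2 ≤ r^2 := by
    have := Complex.sq_norm w
    nlinarith [Complex.normSq_apply w, norm_nonneg w]
  have hx : -r ≤ w.re := by nlinarith [sq_nonneg w.im, sq_nonneg (w.re + r)]
  have hden : 0 < Complex.normSq (1 - w) := by
    rw [Complex.normSq_pos]
    intro h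
    have : w = 1 := by linear_combination -h
    rw [this] at hw; simp at hw; linarith
  have hre : ((1 + 2*w)/(1 - w)).re
      = ((1 + 2*w.re) * (1 - w.re) + (2*w.im) * (-w.im)) / Complex.normSq (1 - w) := by
    rw [Complex.div_re]
    simp [Complex.normSq_apply]
    ring
  rw [hre]
  rw [div_le_div_iff₀ (by linarith) hden]
  have hns : Complex.normSq (1 - w) = (1 - w.re)^2 + w.im^2 := by
    simp [Complex.normSq_apply]; ring
  rw [hns]
  nlinarith [mul_nonneg (by linarith : (0:ℝ) ≤ w.re + r) (by linarith : (0:ℝ) ≤ 1 - r)]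

theorem stmt3 (α : ℝ) (hα0 : 0 ≤ α) (hα1 : α < 1)
    (f : ℂ → ℂ) (hfd : DifferentiableOn ℂ f (ball (0:ℂ) 1))
    (hf0 : f 0 = 0) (hf1 : deriv f 0 = 1)
    (hfne : ∀ z ∈ ball (0:ℂ) 1, z ≠ 0 → f z ≠ 0)
    (hfsub : ∃ ω : ℂ → ℂ, DifferentiableOn ℂ ω (ball (0:ℂ) 1) ∧ ω 0 = 0 ∧
      (∀ z ∈ ball (0:ℂ) 1, ω z ∈ ball (0:ℂ) 1) ∧
      ∀ z ∈ ball (0:ℂ) 1, z ≠ 0 →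
        z * deriv f z / f z = (1 + 2 * ω z) / (1 - ω z))
    (g : ℂ → ℂ) (hgd : DifferentiableOn ℂ g (ball (0:ℂ) 1))
    (hg0 : g 0 = 0) (hg1 : deriv g 0 = 1)
    (hgne : ∀ z ∈ ball (0:ℂ) 1, deriv g z ≠ 0)
    (hgsub : ∃ ω : ℂ → ℂ, DifferentiableOn ℂ ω (ball (0:ℂ) 1) ∧ ω 0 = 0 ∧
      (∀ z ∈ ball (0:ℂ) 1, ω z ∈ ball (0:ℂ) 1) ∧
      ∀ z ∈ ball (0:ℂ) 1,
        1 + z * deriv (deriv g) z / deriv g z = (1 + 2 * ω z) / (1 - ω z))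
    (T : ℂ → ℂ) (hT : ∀ z ∈ ball (0:ℂ) 1, HasDerivAt T (f z * deriv g z) z) :
    ∀ z ∈ ball (0:ℂ) 1, ‖z‖ < (2 - α) / (4 + α) →
      α < (1 + z * deriv (deriv T) z / deriv T z).re := by
  obtain ⟨ω₁, hω₁d, hω₁0, hω₁m, hω₁⟩ := hfsub
  obtain ⟨ω₂, hω₂d, hω₂0, hω₂m, hω₂⟩ := hgsub
  intro z hz hzr
  rcases eq_or_ne z 0 with rfl | hz0
  · simpa using hα1
  -- derivatives of T
  have hball : ball (0:ℂ) 1 ∈ nhds z := isOpen_ball.mem_nhds hz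
  have hT'eq : Set.EqOn (deriv T) (fun w => f w * deriv g w) (ball (0:ℂ) 1) := by
    intro w hw; exact (hT w hw).deriv
  have hT'z : deriv T z = f z * deriv g z := hT'eq hz
  have hdf : DifferentiableAt ℂ f z := hfd.differentiableAt hball
  have hdg' : DifferentiableAt ℂ (deriv g) z :=
    (((hgd.analyticOnNhd isOpen_ball).deriv) z hz).differentiableAt
  have hT''z : deriv (deriv T) z = deriv f z * deriv g z + f z * deriv (deriv g) z := by
    have : deriv (deriv T) z = deriv (fun w => f w * deriv g w) z := by
      apply Filter.EventuallyEq.deriv_eq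
      exact Filter.eventuallyEq_of_mem hball hT'eq
    rw [this, deriv_fun_mul hdf hdg']
  -- algebra
  have hfz : f z ≠ 0 := hfne z hz hz0
  have hgz : deriv g z ≠ 0 := hgne z hz
  have hsplit : 1 + z * deriv (deriv T) z / deriv T z
      = (z * deriv f z / f z) + (1 + z * deriv (deriv g) z / deriv g z) := by
    rw [hT'z, hT''z]
    field_simp
    ring
  rw [hsplit, hω₁ z hz hz0, hω₂ z hz]
  -- Schwarz lemma bounds
  have hz1 : ‖z‖ < 1 := by simpa [mem_ball, dist_zero_right] using hz
  have hb₁ : ‖ω₁ z‖ ≤ ‖z‖ :=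
    Complex.norm_le_norm_of_mapsTo_ball hω₁d
      (fun w hw => ball_subset_closedBall (hω₁m w hw)) hω₁0 hz1
  have hb₂ : ‖ω₂ z‖ ≤ ‖z‖ :=
    Complex.norm_le_norm_of_mapsTo_ball hω₂d
      (fun w hw => ball_subset_closedBall (hω₂m w hw)) hω₂0 hz1
  have h₁ := key_re (ω₁ z) ‖z‖ hb₁ hz1
  have h₂ := key_re (ω₂ z) ‖z‖ hb₂ hz1
  rw [Complex.add_re]
  set r := ‖z‖ with hrdef
  have hr0 : 0 ≤ r := norm_nonneg z
  have hrα : r < (2 - α) / (4 + α) := by simpa [hrdef] using hzr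
  have h4 : (0:ℝ) < 4 + α := by linarith
  have hkey : α < 2 * ((1 - 2*r)/(1+r)) := by
    rw [lt_div_iff₀ h4] at hrα
    rw [show (2:ℝ) * ((1 - 2*r)/(1+r)) = (2*(1 - 2*r))/(1+r) from (mul_div_assoc _ _ _).symm,
      lt_div_iff₀ (by linarith : (0:ℝ) < 1 + r)]
    nlinarith
  calc α < 2 * ((1 - 2*r)/(1+r)) := hkey
    _ ≤ ((1 + 2 * ω₁ z) / (1 - ω₁ z)).re + ((1 + 2 * ω₂ z) / (1 - ω₂ z)).re := by linarith
end

section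
/- Let 0 ≤ α < 1 and γ ≥ 1. If f is starlike of order α (i.e., analytic, f(0)=0, f'(0)=1, f nonvanishing on the punctured disc, Re(zf'(z)/f(z)) > α on Δ) and g is normalized locally univalent on Δ satisfying |zg''(z)/g'(z) − 2|z|²/(1−|z|²)| ≤ 2γ|z|/(1−|z|²), then T_g f(z) = ∫₀^z f(s)g'(s)ds satisfies Re(1 + z(T_g f)''(z)/(T_g f)'(z)) > 0 for all |z| < (γ − √(α² + γ² − 1))/(1 − α). -/
open Complex Metric

theorem stmt4 (α γ : ℝ) (hα0 : 0 ≤ α) (hα1 : α < 1) (hγ : 1 ≤ γ)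
    (f : ℂ → ℂ) (hfd : DifferentiableOn ℂ f (ball (0:ℂ) 1))
    (hf0 : f 0 = 0) (hf1 : deriv f 0 = 1)
    (hfne : ∀ z ∈ ball (0:ℂ) 1, z ≠ 0 → f z ≠ 0)
    (hstar : ∀ z ∈ ball (0:ℂ) 1, z ≠ 0 → α < (z * deriv f z / f z).re)
    (g : ℂ → ℂ) (hgd : DifferentiableOn ℂ g (ball (0:ℂ) 1))
    (hg0 : g 0 = 0) (hg1 : deriv g 0 = 1)
    (hgne : ∀ z ∈ ball (0:ℂ) 1, deriv g z ≠ 0)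
    (hgbd : ∀ z ∈ ball (0:ℂ) 1,
      ‖z * deriv (deriv g) z / deriv g z - ((2 * ‖z‖^2 / (1 - ‖z‖^2) : ℝ) : ℂ)‖
        ≤ 2 * γ * ‖z‖ / (1 - ‖z‖^2))
    (T : ℂ → ℂ) (hT : ∀ z ∈ ball (0:ℂ) 1, HasDerivAt T (f z * deriv g z) z) :
    ∀ z ∈ ball (0:ℂ) 1, ‖z‖ < (γ - Real.sqrt (α^2 + γ^2 - 1)) / (1 - α) →
      0 < (1 + z * deriv (deriv T) z / deriv T z).re := by
  intro z hz hzr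
  rcases eq_or_ne z 0 with rfl | hz0
  · simp
  -- nonzero case
  have hball : IsOpen (ball (0:ℂ) 1) := isOpen_ball
  have hr1 : ‖z‖ < 1 := by simpa using hz
  have hr0 : (0:ℝ) ≤ ‖z‖ := norm_nonneg z
  have hnhds : ball (0:ℂ) 1 ∈ nhds z := hball.mem_nhds hz
  -- analyticity of g and its derivative
  have hga : AnalyticOnNhd ℂ g (ball (0:ℂ) 1) := hgd.analyticOnNhd hball
  have hg'a : AnalyticOnNhd ℂ (deriv g) (ball (0:ℂ) 1) := hga.deriv
  have hg'' : HasDerivAt (deriv g) (deriv (deriv g) z) z :=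
    ((hg'a z hz).differentiableAt).hasDerivAt
  have hf' : HasDerivAt f (deriv f z) z :=
    (hfd.differentiableAt hnhds).hasDerivAt
  -- deriv T
  have hdT : ∀ w ∈ ball (0:ℂ) 1, deriv T w = f w * deriv g w :=
    fun w hw => (hT w hw).deriv
  have hdTz : deriv T z = f z * deriv g z := hdT z hz
  have hEq : deriv T =ᶠ[nhds z] fun w => f w * deriv g w :=
    Filter.eventuallyEq_of_mem hnhds hdT
  have hF : HasDerivAt (fun w => f w * deriv g w)
      (deriv f z * deriv g z + f z * deriv (deriv g) z) z := hf'.mul hg''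
  have hdd : deriv (deriv T) z = deriv f z * deriv g z + f z * deriv (deriv g) z := by
    rw [hEq.deriv_eq, hF.deriv]
  have hfz : f z ≠ 0 := hfne z hz hz0
  have hgz : deriv g z ≠ 0 := hgne z hz
  have hsplit : z * deriv (deriv T) z / deriv T z
      = z * deriv f z / f z + z * deriv (deriv g) z / deriv g z := by
    rw [hdd, hdTz]; field_simp
  set u := z * deriv f z / f z with hu
  set v := z * deriv (deriv g) z / deriv g z with hv
  have hure : α < u.re := hstar z hz hz0
  -- bound on v.re
  have hc1 : (0:ℝ) < 1 - ‖z‖^2 := by nlinarith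
  have hbd := hgbd z hz
  have hvre : 2 * ‖z‖^2 / (1 - ‖z‖^2) - 2 * γ * ‖z‖ / (1 - ‖z‖^2) ≤ v.re := by
    have h1 : |(v - ((2 * ‖z‖^2 / (1 - ‖z‖^2) : ℝ) : ℂ)).re|
        ≤ ‖v - ((2 * ‖z‖^2 / (1 - ‖z‖^2) : ℝ) : ℂ)‖ := Complex.abs_re_le_norm _
    have h2 : (v - ((2 * ‖z‖^2 / (1 - ‖z‖^2) : ℝ) : ℂ)).re
        = v.re - 2 * ‖z‖^2 / (1 - ‖z‖^2) := by rw [Complex.sub_re, Complex.ofReal_re]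
    have := abs_le.mp (h1.trans hbd)
    rw [h2] at this
    linarith [this.1]
  -- quadratic inequality
  have hs : Real.sqrt (α^2 + γ^2 - 1) ^ 2 = α^2 + γ^2 - 1 := by
    rw [Real.sq_sqrt]; nlinarith
  have hs0 : 0 ≤ Real.sqrt (α^2 + γ^2 - 1) := Real.sqrt_nonneg _
  have h1α : (0:ℝ) < 1 - α := by linarith
  have hrlt : ‖z‖ * (1 - α) < γ - Real.sqrt (α^2 + γ^2 - 1) :=
    (lt_div_iff₀ h1α).mp hzr
  have hquad : 0 ≤ (1 - α) * ‖z‖^2 - 2 * γ * ‖z‖ + (1 + α) := by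
    nlinarith [sq_nonneg (‖z‖ * (1 - α) - (γ - Real.sqrt (α^2 + γ^2 - 1))),
      mul_nonneg hr0 hs0]
  -- combine
  rw [hsplit]
  have hre : (1 + (u + v)).re = 1 + u.re + v.re := by simp [Complex.add_re]; ring
  rw [hre]
  have key : 2 * ‖z‖^2 / (1 - ‖z‖^2) - 2 * γ * ‖z‖ / (1 - ‖z‖^2)
      = (2 * ‖z‖^2 - 2 * γ * ‖z‖) / (1 - ‖z‖^2) := by ring
  have : -(1 + α) ≤ (2 * ‖z‖^2 - 2 * γ * ‖z‖) / (1 - ‖z‖^2) := by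
    rw [le_div_iff₀ hc1]; nlinarith
  rw [key] at hvre
  linarith
end

section
/- Let 0 ≤ α < 1. If f is starlike of order α on the unit disc and g is normalized analytic satisfying Re(1 + zg''(z)/g'(z)) ≥ (1 − 2r + r²)/(1 − r²) for |z| = r < 1, then T_g f(z) = ∫₀^z f(s)g'(s)ds is convex univalent on the whole unit disc: Re(1 + z(T_g f)''(z)/(T_g f)'(z)) > 0 for all |z| < 1. -/
open Complex Metric

theorem stmt6 (α : ℝ) (hα0 : 0 ≤ α) (hα1 : α < 1)
    (f : ℂ → ℂ) (hfd : DifferentiableOn ℂ f (ball (0:ℂ) 1))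
    (hf0 : f 0 = 0) (hf1 : deriv f 0 = 1)
    (hfne : ∀ z ∈ ball (0:ℂ) 1, z ≠ 0 → f z ≠ 0)
    (hstar : ∀ z ∈ ball (0:ℂ) 1, z ≠ 0 → α < (z * deriv f z / f z).re)
    (g : ℂ → ℂ) (hgd : DifferentiableOn ℂ g (ball (0:ℂ) 1))
    (hg0 : g 0 = 0) (hg1 : deriv g 0 = 1)
    (hgne : ∀ z ∈ ball (0:ℂ) 1, deriv g z ≠ 0)
    (hgbd : ∀ z ∈ ball (0:ℂ) 1,
      (1 - 2 * ‖z‖ + ‖z‖^2) / (1 - ‖z‖^2)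
        ≤ (1 + z * deriv (deriv g) z / deriv g z).re)
    (T : ℂ → ℂ) (hT : ∀ z ∈ ball (0:ℂ) 1, HasDerivAt T (f z * deriv g z) z) :
    ∀ z ∈ ball (0:ℂ) 1, 0 < (1 + z * deriv (deriv T) z / deriv T z).re := by
  intro z hz
  rcases eq_or_ne z 0 with rfl | hz0
  · simp
  · have hzball : ‖z‖ < 1 := by simpa [mem_ball_zero_iff] using hz
    have hfz := hfne z hz hz0
    have hgz := hgne z hz
    have hfa : DifferentiableAt ℂ f z := hfd.differentiableAt (isOpen_ball.mem_nhds hz)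
    have hga : AnalyticOnNhd ℂ g (ball 0 1) := hgd.analyticOnNhd isOpen_ball
    have hg'a : DifferentiableAt ℂ (deriv g) z := (hga.deriv z hz).differentiableAt
    have hT' : deriv T z = f z * deriv g z := (hT z hz).deriv
    have heq : deriv T =ᶠ[nhds z] fun w => f w * deriv g w :=
      Filter.eventuallyEq_of_mem (isOpen_ball.mem_nhds hz) (fun w hw => (hT w hw).deriv)
    have hT'' : deriv (deriv T) z
        = deriv f z * deriv g z + f z * deriv (deriv g) z := by
      rw [heq.deriv_eq, deriv_fun_mul hfa hg'a]
    have key : 1 + z * deriv (deriv T) z / deriv T z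
        = z * deriv f z / f z + (1 + z * deriv (deriv g) z / deriv g z) := by
      rw [hT'', hT']
      field_simp
      ring
    rw [key, Complex.add_re]
    have h1 : α < (z * deriv f z / f z).re := hstar z hz hz0
    have h2 := hgbd z hz
    have hc : 0 < (1 - 2 * ‖z‖ + ‖z‖^2) / (1 - ‖z‖^2) := by
      apply div_pos
      · nlinarith [norm_nonneg z]
      · nlinarith [norm_nonneg z]
    linarith
end

section
/- Let 0 ≤ α < 1 and 0 < β ≤ 1. If f is starlike of order α on the unit disc and g is normalized locally univalent satisfying |g''(z)/g'(z)| ≤ β/(1 − |z|) on the unit disc, then T_g f(z) = ∫₀^z f(s)g'(s)ds satisfies Re(1 + z(T_g f)''(z)/(T_g f)'(z)) > 0 for all |z| < (1 + α)/(1 + α + β). -/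
open Complex Metric

theorem stmt9 (α β : ℝ) (hα0 : 0 ≤ α) (hα1 : α < 1) (hβ0 : 0 < β) (hβ1 : β ≤ 1)
    (f : ℂ → ℂ) (hfd : DifferentiableOn ℂ f (ball (0:ℂ) 1))
    (hf0 : f 0 = 0) (hf1 : deriv f 0 = 1)
    (hfne : ∀ z ∈ ball (0:ℂ) 1, z ≠ 0 → f z ≠ 0)
    (hstar : ∀ z ∈ ball (0:ℂ) 1, z ≠ 0 → α < (z * deriv f z / f z).re)
    (g : ℂ → ℂ) (hgd : DifferentiableOn ℂ g (ball (0:ℂ) 1))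
    (hg0 : g 0 = 0) (hg1 : deriv g 0 = 1)
    (hgne : ∀ z ∈ ball (0:ℂ) 1, deriv g z ≠ 0)
    (hgbd : ∀ z ∈ ball (0:ℂ) 1, ‖deriv (deriv g) z / deriv g z‖ ≤ β / (1 - ‖z‖))
    (T : ℂ → ℂ) (hT : ∀ z ∈ ball (0:ℂ) 1, HasDerivAt T (f z * deriv g z) z) :
    ∀ z ∈ ball (0:ℂ) 1, ‖z‖ < (1 + α) / (1 + α + β) →
      0 < (1 + z * deriv (deriv T) z / deriv T z).re := by
  intro z hz hzr
  rcases eq_or_ne z 0 with rfl | hz0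
  · simp
  have hz1 : ‖z‖ < 1 := mem_ball_zero_iff.mp hz
  have hderivT : ∀ w ∈ ball (0:ℂ) 1, deriv T w = f w * deriv g w := fun w hw => (hT w hw).deriv
  have hAg : AnalyticOnNhd ℂ g (ball 0 1) := hgd.analyticOnNhd isOpen_ball
  have hAg' : AnalyticOnNhd ℂ (deriv g) (ball 0 1) := hAg.deriv
  have hAf : AnalyticOnNhd ℂ f (ball 0 1) := hfd.analyticOnNhd isOpen_ball
  have hfz : DifferentiableAt ℂ f z := (hAf z hz).differentiableAt
  have hg'z : DifferentiableAt ℂ (deriv g) z := (hAg' z hz).differentiableAt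
  have heq : deriv T =ᶠ[nhds z] fun w => f w * deriv g w :=
    Filter.eventuallyEq_of_mem (isOpen_ball.mem_nhds hz) hderivT
  have hT'' : deriv (deriv T) z = deriv f z * deriv g z + f z * deriv (deriv g) z := by
    rw [heq.deriv_eq, deriv_fun_mul hfz hg'z]
  have hfne' := hfne z hz hz0
  have hgne' := hgne z hz
  have key : z * deriv (deriv T) z / deriv T z
      = z * deriv f z / f z + z * deriv (deriv g) z / deriv g z := by
    rw [hT'', hderivT z hz]
    field_simp
  rw [key]
  have h1 : α < (z * deriv f z / f z).re := hstar z hz hz0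
  have h2 : -(‖z‖ * (β / (1 - ‖z‖))) ≤ (z * deriv (deriv g) z / deriv g z).re := by
    have hb := hgbd z hz
    have hn : ‖z * deriv (deriv g) z / deriv g z‖ ≤ ‖z‖ * (β / (1 - ‖z‖)) := by
      rw [mul_div_assoc, norm_mul]
      exact mul_le_mul_of_nonneg_left hb (norm_nonneg z)
    have hre : |(z * deriv (deriv g) z / deriv g z).re| ≤ ‖z * deriv (deriv g) z / deriv g z‖ :=
      Complex.abs_re_le_norm _
    linarith [neg_abs_le (z * deriv (deriv g) z / deriv g z).re]
  have hr : ‖z‖ * (β / (1 - ‖z‖)) < 1 + α := by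
    rw [mul_div_assoc', div_lt_iff₀ (by linarith)]
    have h3 : ‖z‖ * (1 + α + β) < 1 + α := by
      have := (lt_div_iff₀ (by linarith : (0:ℝ) < 1 + α + β)).mp hzr
      nlinarith
    nlinarith [norm_nonneg z]
  simp only [add_re, one_re]
  linarith
end

section
/- Let 0 ≤ α < 1 and k ≥ 2. If f is starlike of order α on the unit disc and g is normalized locally univalent satisfying |zg''(z)/g'(z) − 2|z|²/(1−|z|²)| ≤ k|z|/(1−|z|²) on the unit disc, then T_g f(z) = ∫₀^z f(s)g'(s)ds satisfies Re(1 + z(T_g f)''(z)/(T_g f)'(z)) > 0 for all |z| < (k − √(k² − 4(1−α²)))/(2(1−α)). -/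
open Complex Metric

theorem stmt10 (α k : ℝ) (hα0 : 0 ≤ α) (hα1 : α < 1) (hk : 2 ≤ k)
    (f : ℂ → ℂ) (hfd : DifferentiableOn ℂ f (ball (0:ℂ) 1))
    (hf0 : f 0 = 0) (hf1 : deriv f 0 = 1)
    (hfne : ∀ z ∈ ball (0:ℂ) 1, z ≠ 0 → f z ≠ 0)
    (hstar : ∀ z ∈ ball (0:ℂ) 1, z ≠ 0 → α < (z * deriv f z / f z).re)
    (g : ℂ → ℂ) (hgd : DifferentiableOn ℂ g (ball (0:ℂ) 1))
    (hg0 : g 0 = 0) (hg1 : deriv g 0 = 1)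
    (hgne : ∀ z ∈ ball (0:ℂ) 1, deriv g z ≠ 0)
    (hgbd : ∀ z ∈ ball (0:ℂ) 1,
      ‖z * deriv (deriv g) z / deriv g z - ((2 * ‖z‖^2 / (1 - ‖z‖^2) : ℝ) : ℂ)‖
        ≤ k * ‖z‖ / (1 - ‖z‖^2))
    (T : ℂ → ℂ) (hT : ∀ z ∈ ball (0:ℂ) 1, HasDerivAt T (f z * deriv g z) z) :
    ∀ z ∈ ball (0:ℂ) 1, ‖z‖ < (k - Real.sqrt (k^2 - 4 * (1 - α^2))) / (2 * (1 - α)) →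
      0 < (1 + z * deriv (deriv T) z / deriv T z).re := by
  intro z hz hzr
  rcases eq_or_ne z 0 with rfl | hz0
  · simp
  -- basic facts about r = ‖z‖
  set r : ℝ := ‖z‖ with hr
  have hr1 : r < 1 := by simpa [hr, dist_zero_right] using (mem_ball.mp hz)
  have hr0 : 0 ≤ r := norm_nonneg z
  have hden : 0 < 1 - r ^ 2 := by nlinarith
  -- quadratic inequality from hzr
  have hα : 0 < 1 - α := by linarith
  have hs0 : (0:ℝ) ≤ k ^ 2 - 4 * (1 - α ^ 2) := by nlinarith
  set s : ℝ := Real.sqrt (k ^ 2 - 4 * (1 - α ^ 2)) with hs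
  have hsnn : 0 ≤ s := Real.sqrt_nonneg _
  have hs2 : s ^ 2 = k ^ 2 - 4 * (1 - α ^ 2) := Real.sq_sqrt hs0
  have hlin : r * (2 * (1 - α)) < k - s := by
    have := (lt_div_iff₀ (by positivity : (0:ℝ) < 2 * (1 - α))).mp hzr
    linarith
  have hq : 0 < (1 - α) * r ^ 2 - k * r + (1 + α) := by
    have ht : 0 < (k - 2 * (1 - α) * r) - s := by nlinarith
    have ht2 : 0 < (k - 2 * (1 - α) * r) + s := by nlinarith
    nlinarith [mul_pos ht ht2]
  -- analyticity
  have hzmem : ball (0:ℂ) 1 ∈ nhds z := isOpen_ball.mem_nhds hz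
  have hgan : AnalyticOnNhd ℂ g (ball (0:ℂ) 1) := hgd.analyticOnNhd isOpen_ball
  have hfz : f z ≠ 0 := hfne z hz hz0
  have hgz : deriv g z ≠ 0 := hgne z hz
  have hdf : HasDerivAt f (deriv f z) z := (hfd.differentiableAt hzmem).hasDerivAt
  have hdg' : HasDerivAt (deriv g) (deriv (deriv g) z) z :=
    ((hgan.deriv z hz).differentiableAt).hasDerivAt
  -- compute deriv T and deriv (deriv T)
  have hT1 : deriv T z = f z * deriv g z := (hT z hz).deriv
  have hTev : deriv T =ᶠ[nhds z] fun w => f w * deriv g w := by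
    filter_upwards [hzmem] with w hw
    exact (hT w hw).deriv
  have hT2 : deriv (deriv T) z = deriv f z * deriv g z + f z * deriv (deriv g) z := by
    rw [hTev.deriv_eq]
    exact (hdf.mul hdg').deriv
  have key : z * deriv (deriv T) z / deriv T z
      = z * deriv f z / f z + z * deriv (deriv g) z / deriv g z := by
    rw [hT1, hT2]
    field_simp
  -- real part estimates
  have hA : α < (z * deriv f z / f z).re := hstar z hz hz0
  have hBnorm := hgbd z hz
  have hB : 2 * r ^ 2 / (1 - r ^ 2) - k * r / (1 - r ^ 2)
      ≤ (z * deriv (deriv g) z / deriv g z).re := by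
    set w : ℂ := z * deriv (deriv g) z / deriv g z with hw
    have h1 := Complex.abs_re_le_norm (w - ((2 * r ^ 2 / (1 - r ^ 2) : ℝ) : ℂ))
    rw [Complex.sub_re, Complex.ofReal_re] at h1
    have h2 := le_trans h1 hBnorm
    have := abs_le.mp h2
    linarith [this.1]
  have hpos : 0 < 1 + α + (2 * r ^ 2 / (1 - r ^ 2) - k * r / (1 - r ^ 2)) := by
    have heq : 1 + α + (2 * r ^ 2 / (1 - r ^ 2) - k * r / (1 - r ^ 2))
        = ((1 - α) * r ^ 2 - k * r + (1 + α)) / (1 - r ^ 2) := by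
      field_simp
      ring
    rw [heq]
    exact div_pos hq hden
  rw [key]
  simp only [Complex.add_re, Complex.one_re]
  linarith
end

section
/- Suppose f is analytic, nonvanishing on the punctured unit disc, with f(0)=0, f'(0)=1, and zf'/f ≺ (1+Az)/(1+Bz) for complex A, B with |A|>1, |B|≤1. Then for any 0 ≤ α < 1 and |z| = r < 1, Re(zf'(z)/f(z)) − α ≥ (1 − α − |B−A|r − (Re(A·conj(B)) − α|B|²)r²)/(1 − |B|²r²). -/
open Complex Metric

theorem stmt16 (A B : ℂ) (hA : 1 < ‖A‖) (hB : ‖B‖ ≤ 1)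
    (α : ℝ) (hα0 : 0 ≤ α) (hα1 : α < 1)
    (f : ℂ → ℂ) (hfd : DifferentiableOn ℂ f (ball (0:ℂ) 1))
    (hf0 : f 0 = 0) (hf1 : deriv f 0 = 1)
    (hfne : ∀ z ∈ ball (0:ℂ) 1, z ≠ 0 → f z ≠ 0)
    (hsub : ∃ ω : ℂ → ℂ, DifferentiableOn ℂ ω (ball (0:ℂ) 1) ∧ ω 0 = 0 ∧
      (∀ z ∈ ball (0:ℂ) 1, ω z ∈ ball (0:ℂ) 1) ∧
      ∀ z ∈ ball (0:ℂ) 1, z ≠ 0 →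
        z * deriv f z / f z = (1 + A * ω z) / (1 + B * ω z)) :
    ∀ z ∈ ball (0:ℂ) 1, z ≠ 0 →
      (1 - α - ‖B - A‖ * ‖z‖ - ((A * (starRingEnd ℂ) B).re - α * ‖B‖^2) * ‖z‖^2)
          / (1 - ‖B‖^2 * ‖z‖^2)
        ≤ (z * deriv f z / f z).re - α := by
  obtain ⟨ω, hωd, hω0, hωmaps, hωeq⟩ := hsub
  intro z hz hz0
  set r : ℝ := ‖z‖ with hr
  have hr0 : 0 ≤ r := norm_nonneg z
  have hr1 : r < 1 := by simpa [hr] using mem_ball_zero_iff.mp hz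
  -- Schwarz lemma
  set w : ℂ := ω z with hwdef
  have hwr : ‖w‖ ≤ r := by
    have := Complex.norm_le_norm_of_mapsTo_ball hωd
      (fun u hu => mem_closedBall_zero_iff.mpr (by simpa using (mem_ball_zero_iff.mp (hωmaps u hu)).le))
      hω0 (show ‖z‖ < 1 by simpa using hr1)
    simpa [hr, hwdef] using this
  have hBr : ‖B‖ * r < 1 := by nlinarith [norm_nonneg B]
  have hBw : ‖B * w‖ < 1 := by
    calc ‖B * w‖ = ‖B‖ * ‖w‖ := norm_mul _ _
    _ ≤ ‖B‖ * r := by nlinarith [norm_nonneg B]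
    _ < 1 := hBr
  have hden1 : (1 : ℂ) + B * w ≠ 0 := by
    intro h
    have h3 : B * w = -1 := by linear_combination h
    rw [h3] at hBw
    simp at hBw
  have hD : (0:ℝ) < 1 - ‖B‖^2 * r^2 := by nlinarith [hBr, mul_nonneg (norm_nonneg B) hr0]
  rw [hωeq z hz hz0]
  set F : ℂ := (1 + A * w) / (1 + B * w) with hF
  have hBconj : B * (starRingEnd ℂ) B = ((‖B‖^2 : ℝ) : ℂ) := by
    rw [Complex.mul_conj']
    norm_cast
  set d : ℂ := 1 - B * (starRingEnd ℂ) B * (r:ℂ)^2 with hd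
  have hdre : d = ((1 - ‖B‖^2 * r^2 : ℝ) : ℂ) := by
    rw [hd, hBconj]; push_cast; ring
  have hdne : d ≠ 0 := by
    rw [hdre]; exact_mod_cast ne_of_gt hD
  set c : ℂ := (1 - A * (starRingEnd ℂ) B * (r:ℂ)^2) / d with hc
  have hkey : F - c = ((A - B) * (w + (starRingEnd ℂ) B * (r:ℂ)^2)) / ((1 + B * w) * d) := by
    have hdne' : (1 - B * (starRingEnd ℂ) B * (r:ℂ)^2) ≠ 0 := hdne
    rw [hF, hc, hd]
    rw [div_sub_div _ _ hden1 hdne', div_eq_div_iff (mul_ne_zero hden1 hdne') (mul_ne_zero hden1 hdne')]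
    ring
  -- bound ‖w + conj B * r²‖ ≤ r * ‖1 + B w‖
  have hw2 : w.re^2 + w.im^2 ≤ r^2 := by
    have h1 : ‖w‖^2 ≤ r^2 := by nlinarith [norm_nonneg w]
    rwa [Complex.sq_norm, Complex.normSq_apply, ← pow_two, ← pow_two] at h1
  have hB2 : B.re^2 + B.im^2 ≤ 1 := by
    have h1 : ‖B‖^2 ≤ 1 := by nlinarith [norm_nonneg B]
    rwa [Complex.sq_norm, Complex.normSq_apply, ← pow_two, ← pow_two] at h1
  have hnum : ‖w + (starRingEnd ℂ) B * (r:ℂ)^2‖ ≤ r * ‖1 + B * w‖ := by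
    have hA1 : (0:ℝ) ≤ r^2 - (w.re^2 + w.im^2) := by linarith
    have hA2 : (0:ℝ) ≤ 1 - (B.re^2 + B.im^2) * r^2 := by nlinarith
    have h1 : ‖w + (starRingEnd ℂ) B * (r:ℂ)^2‖^2 ≤ (r * ‖1 + B * w‖)^2 := by
      rw [show ((r:ℂ))^2 = ((r^2:ℝ):ℂ) by push_cast; ring]
      rw [mul_pow, Complex.sq_norm (w + (starRingEnd ℂ) B * ((r^2:ℝ):ℂ)), Complex.sq_norm (1 + B * w)]
      simp only [Complex.normSq_apply, Complex.add_re, Complex.add_im, Complex.mul_re,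
        Complex.mul_im, Complex.one_re, Complex.one_im, Complex.conj_re, Complex.conj_im,
        Complex.ofReal_re, Complex.ofReal_im]
      nlinarith [mul_nonneg hA1 hA2]
    exact (pow_le_pow_iff_left₀ (norm_nonneg _) (by positivity) (by norm_num)).mp h1
  have hFc : ‖F - c‖ ≤ ‖A - B‖ * r / (1 - ‖B‖^2 * r^2) := by
    rw [hkey, norm_div, norm_mul, norm_mul, hdre, Complex.norm_real,
      Real.norm_eq_abs, abs_of_pos hD]
    rw [div_le_div_iff₀ (mul_pos (norm_pos_iff.mpr hden1) hD) hD]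
    calc ‖A - B‖ * ‖w + (starRingEnd ℂ) B * (r:ℂ)^2‖ * (1 - ‖B‖^2 * r^2)
        ≤ ‖A - B‖ * (r * ‖1 + B * w‖) * (1 - ‖B‖^2 * r^2) := by
          have := mul_le_mul_of_nonneg_left hnum (norm_nonneg (A - B))
          nlinarith [norm_nonneg (A-B), hD]
      _ = ‖A - B‖ * r * (‖1 + B * w‖ * (1 - ‖B‖^2 * r^2)) := by ring
  -- real part of c
  have hcre : c.re = (1 - (A * (starRingEnd ℂ) B).re * r^2) / (1 - ‖B‖^2 * r^2) := by
    rw [hc, hdre, Complex.div_ofReal_re]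
    congr 1
    have : A * (starRingEnd ℂ) B * (r:ℂ)^2 = ((r^2 : ℝ):ℂ) * (A * (starRingEnd ℂ) B) := by
      push_cast; ring
    rw [Complex.sub_re, Complex.one_re, this, Complex.re_ofReal_mul]
    ring
  have hFre : c.re - ‖F - c‖ ≤ F.re := by
    have h1 : c.re - F.re ≤ |(c - F).re| := by
      rw [Complex.sub_re]; exact le_abs_self _
    have h2 : |(c - F).re| ≤ ‖c - F‖ := Complex.abs_re_le_norm _
    rw [← norm_neg, neg_sub] at h2
    linarith
  have hBA : ‖B - A‖ = ‖A - B‖ := norm_sub_rev _ _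
  have hlhs : (1 - α - ‖B - A‖ * r - ((A * (starRingEnd ℂ) B).re - α * ‖B‖^2) * r^2)
      / (1 - ‖B‖^2 * r^2)
      = (1 - (A * (starRingEnd ℂ) B).re * r^2) / (1 - ‖B‖^2 * r^2)
        - ‖A - B‖ * r / (1 - ‖B‖^2 * r^2) - α := by
    have hDne : (1:ℝ) - ‖B‖ ^ 2 * r ^ 2 ≠ 0 := ne_of_gt hD
    rw [hBA, div_sub_div_same, div_sub' hDne, div_eq_div_iff hDne hDne]
    ring
  rw [hlhs]
  rw [← hcre]
  linarith [hFc, hFre]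
end
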